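/- arXiv:1402.2127 — 4 statements merged into one kernel-verified Lean document; each statement's English description precedes it below -/
import Mathlib

section
/- The rotation relation on trees is symmetric: if t₁ ∼_r t₂ via a bijection r, then t₂ ∼_{r⁻¹} t₁. Consequently, the rotation relation ∼ is an equivalence relation on trees. -/
open scoped Classical

/-- Positions in a tree: finite sequences of natural numbers. -/
abbrev Pos := List ℕ

/-- A tree over an alphabet `A`: a finite partial function from positions to `A`
whose domain is prefix-closed and closed under taking smaller sibling indices. -/
structure PTree (A : Type) where
  f : Pos → Option A
  fin : {p : Pos | f p ≠ none}.Finite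
  prefixClosed : ∀ (p : Pos) (i : ℕ), f (p ++ [i]) ≠ none → f p ≠ none
  childClosed : ∀ (p : Pos) (i j : ℕ), j < i → f (p ++ [i]) ≠ none → f (p ++ [j]) ≠ none

namespace PTree

/-- Domain of a tree. -/
def dom {A : Type} (t : PTree A) : Set Pos := {p | t.f p ≠ none}

/-- The maximal direction `N` such that some position `p.N` is in the domain. -/
noncomputable def maxDir {A : Type} (t : PTree A) : ℕ :=
  sSup {i | ∃ p, p ++ [i] ∈ t.dom}

/-- The direction alphabet `D(t) = {-1, 0, …, N}`. -/
noncomputable def dirs {A : Type} (t : PTree A) : Set ℤ :=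
  {e | e = -1 ∨ (0 ≤ e ∧ e ≤ (t.maxDir : ℤ))}

/-- Moving from position `p` in direction `e`: `-1` is the parent direction
(`(p.i).(-1) = p`), a non-negative direction `e` leads to the child `p.e`. -/
def step (p : Pos) (e : ℤ) : Pos :=
  if e = -1 then p.dropLast else p ++ [e.toNat]

/-- `t ∼_r u`: `u` is a rotation of `t` via the bijection `r`. -/
noncomputable def IsRotation {A B : Type} (t : PTree A) (u : PTree B) (r : Pos → Pos) : Prop :=
  Set.BijOn r t.dom u.dom ∧
  ∀ p ∈ t.dom, ∀ d : ℕ, (p ++ [d]) ∈ t.dom →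
    ∃ e ∈ u.dirs, r (p ++ [d]) = step (r p) e

/-- A simple path in a tree: pairwise distinct positions, each obtained from the
previous one by moving in a direction from `D(t) ∪ {-1}`. -/
noncomputable def IsPath {A : Type} (t : PTree A) (ps : List Pos) : Prop :=
  ps.Nodup ∧ (∀ q ∈ ps, q ∈ t.dom) ∧
  ps.Chain' (fun a b => ∃ e ∈ t.dirs, b = step a e)

end PTree

namespace PTree

variable {A B C : Type}

lemma neg_one_mem_dirs (t : PTree A) : (-1 : ℤ) ∈ t.dirs := Or.inl rfl

lemma finDom (t : PTree A) : t.dom.Finite := t.fin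

lemma mem_dirs_of_child (t : PTree A) {p : Pos} {d : ℕ} (h : p ++ [d] ∈ t.dom) :
    (d : ℤ) ∈ t.dirs := by
  have hbdd : BddAbove {i | ∃ p, p ++ [i] ∈ t.dom} := by
    apply Set.Finite.bddAbove
    apply (t.finDom.image (fun q => q.getLastD 0)).subset
    rintro i ⟨p, hp⟩
    exact ⟨p ++ [i], hp, by simp⟩
  refine Or.inr ⟨by positivity, ?_⟩
  exact_mod_cast le_csSup hbdd ⟨p, h⟩

lemma root_mem (t : PTree A) {p : Pos} (h : p ∈ t.dom) : ([] : Pos) ∈ t.dom := by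
  induction p using List.reverseRecOn with
  | nil => exact h
  | append_singleton l a ih => exact ih (t.prefixClosed l a h)

lemma dropLast_mem (t : PTree A) {p : Pos} (h : p ∈ t.dom) : p.dropLast ∈ t.dom := by
  induction p using List.reverseRecOn with
  | nil => exact h
  | append_singleton l a _ =>
      rw [List.dropLast_concat]; exact t.prefixClosed l a h

lemma step_neg_one (p : Pos) : step p (-1) = p.dropLast := if_pos rfl

lemma step_natCast (p : Pos) (d : ℕ) : step p (d : ℤ) = p ++ [d] := by
  have : ((d : ℤ)) ≠ -1 := by omega
  simp [step, this]

lemma dropLast_ne {p : Pos} (h : p ≠ []) : p.dropLast ≠ p := by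
  intro hc
  have := congrArg List.length hc
  rw [List.length_dropLast] at this
  have : p.length ≠ 0 := fun h0 => h (List.eq_nil_of_length_eq_zero h0)
  omega

/-- Reversing an edge: if `b = step a e` with `a ≠ b`, both in the domain,
then `a = step b e'` for some direction `e'`. -/
lemma reverse_step (t : PTree A) {a b : Pos} (ha : a ∈ t.dom) (hb : b ∈ t.dom)
    {e : ℤ} (he : e ∈ t.dirs) (hab : b = step a e) (hne : a ≠ b) :
    ∃ e' ∈ t.dirs, a = step b e' := by
  rcases he with rfl | ⟨h0, _⟩
  · -- b = a.dropLast, so a = b ++ [a.getLast]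
    rw [step_neg_one] at hab
    have hanil : a ≠ [] := by
      rintro rfl
      exact hne (by simpa using hab.symm)
    have hkey : b ++ [a.getLast hanil] = a := by
      rw [hab]; exact List.dropLast_append_getLast hanil
    refine ⟨(a.getLast hanil : ℤ), t.mem_dirs_of_child (p := b) ?_, ?_⟩
    · rw [hkey]; exact ha
    · rw [step_natCast]
      simp [hkey]
  · -- b = a ++ [e.toNat], so a = b.dropLast
    have hne1 : e ≠ -1 := by omega
    rw [step, if_neg hne1] at hab
    exact ⟨-1, t.neg_one_mem_dirs, by rw [step_neg_one, hab, List.dropLast_concat]⟩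

/-- Core symmetry lemma. -/
lemma isRotation_symm (t₁ : PTree A) (t₂ : PTree B) (r r' : Pos → Pos)
    (h : IsRotation t₁ t₂ r) (hinv : Set.InvOn r' r t₁.dom t₂.dom) :
    IsRotation t₂ t₁ r' := by
  obtain ⟨hbij, hrot⟩ := h
  refine ⟨hbij.symm hinv.symm, ?_⟩
  -- Handle empty domain
  rcases Set.eq_empty_or_nonempty t₁.dom with hemp | hne
  · intro p hp
    exfalso
    have : t₂.dom ⊆ r '' t₁.dom := hbij.surjOn
    rw [hemp] at this
    simpa using this hp
  -- The "child" map on edges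
  set E₁ : Set Pos := t₁.dom \ {[]} with hE₁
  set E₂ : Set Pos := t₂.dom \ {[]} with hE₂
  set φ : Pos → Pos := fun q => if r q = (r q.dropLast).dropLast then r q.dropLast else r q
    with hφ
  have hinj : Set.InjOn r t₁.dom := hbij.injOn
  have hspec : ∀ q ∈ E₁, φ q ∈ E₂ ∧
      ((r q = (φ q).dropLast ∧ r q.dropLast = φ q) ∨
       (r q = φ q ∧ r q.dropLast = (φ q).dropLast)) := by
    rintro q ⟨hq, hqnil⟩
    simp only [Set.mem_singleton_iff] at hqnil
    have hqd : q.dropLast ∈ t₁.dom := t₁.dropLast_mem hq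
    have hqne : q.dropLast ≠ q := dropLast_ne hqnil
    have hrne : r q.dropLast ≠ r q := fun hc => hqne (hinj hqd hq hc)
    have hql : q.dropLast ++ [q.getLast hqnil] = q := List.dropLast_append_getLast hqnil
    obtain ⟨e, he, hstep⟩ := by
      have := hrot q.dropLast hqd (q.getLast hqnil) (by rw [hql]; exact hq)
      rwa [hql] at this
    rcases he with rfl | ⟨h0, _⟩
    · -- parent direction: r q = (r q.dropLast).dropLast
      rw [step_neg_one] at hstep
      have hcond : r q = (r q.dropLast).dropLast := hstep
      have hφq : φ q = r q.dropLast := by rw [hφ]; simp [hcond]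
      have hnil2 : r q.dropLast ≠ [] := by
        intro hc
        apply hrne
        rw [hc, hstep, hc]
        simp
      refine ⟨⟨hφq ▸ hbij.mapsTo hqd, by simpa [hφq] using hnil2⟩, Or.inl ⟨?_, hφq.symm⟩⟩
      rw [hφq, hcond]
    · -- child direction: r q = r q.dropLast ++ [e.toNat]
      have hne1 : e ≠ -1 := by omega
      rw [step, if_neg hne1] at hstep
      have hcond : ¬ (r q = (r q.dropLast).dropLast) := by
        intro hc
        have := congrArg List.length (hstep.symm.trans hc)
        rw [List.length_append, List.length_dropLast] at this
        simp only [List.length_singleton] at this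
        omega
      have hφq : φ q = r q := by rw [hφ]; simp [hcond]
      refine ⟨⟨hφq ▸ hbij.mapsTo hq, ?_⟩, Or.inr ⟨hφq.symm, ?_⟩⟩
      · simp only [Set.mem_singleton_iff, hφq, hstep]
        simp
      · rw [hφq, hstep, List.dropLast_concat]
  -- φ maps E₁ into E₂ injectively
  have hmaps : Set.MapsTo φ E₁ E₂ := fun q hq => (hspec q hq).1
  have hφinj : Set.InjOn φ E₁ := by
    intro q₁ hq₁ q₂ hq₂ hfeq
    by_contra hne'
    obtain ⟨hm₁, hc₁⟩ := hspec q₁ hq₁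
    obtain ⟨hm₂, hc₂⟩ := hspec q₂ hq₂
    have hd₁ : q₁.dropLast ∈ t₁.dom := t₁.dropLast_mem hq₁.1
    have hd₂ : q₂.dropLast ∈ t₁.dom := t₁.dropLast_mem hq₂.1
    have hlen : ∀ q : Pos, q ≠ ([] : Pos) → q.dropLast.length + 1 = q.length := by
      intro q hq
      rw [List.length_dropLast]
      have : q.length ≠ 0 := fun h0 => hq (List.eq_nil_of_length_eq_zero h0)
      omega
    have hq₁nil : q₁ ≠ [] := by simpa using hq₁.2
    have hq₂nil : q₂ ≠ [] := by simpa using hq₂.2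
    rw [hfeq] at hc₁
    -- endpoints of the edges coincide
    rcases hc₁ with ⟨ha₁, hb₁⟩ | ⟨ha₁, hb₁⟩ <;> rcases hc₂ with ⟨ha₂, hb₂⟩ | ⟨ha₂, hb₂⟩
    · exact hne' (hinj hq₁.1 hq₂.1 (ha₁.trans ha₂.symm))
    · have e1 : q₁ = q₂.dropLast := hinj hq₁.1 hd₂ (ha₁.trans hb₂.symm)
      have e2 : q₁.dropLast = q₂ := hinj hd₁ hq₂.1 (hb₁.trans ha₂.symm)
      have l1 := hlen q₁ hq₁nil
      have l2 := hlen q₂ hq₂nil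
      rw [e2] at l1
      rw [← e1] at l2
      omega
    · have e1 : q₁ = q₂.dropLast := hinj hq₁.1 hd₂ (ha₁.trans hb₂.symm)
      have e2 : q₁.dropLast = q₂ := hinj hd₁ hq₂.1 (hb₁.trans ha₂.symm)
      have l1 := hlen q₁ hq₁nil
      have l2 := hlen q₂ hq₂nil
      rw [e2] at l1
      rw [← e1] at l2
      omega
    · exact hne' (hinj hq₁.1 hq₂.1 (ha₁.trans ha₂.symm))
  -- cardinality: |E₁| = |E₂|
  have hrootm₁ : ([] : Pos) ∈ t₁.dom := t₁.root_mem hne.choose_spec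
  have hne₂ : t₂.dom.Nonempty := ⟨r hne.choose, hbij.mapsTo hne.choose_spec⟩
  have hrootm₂ : ([] : Pos) ∈ t₂.dom := t₂.root_mem hne₂.choose_spec
  have hfin₁ : E₁.Finite := t₁.finDom.subset Set.diff_subset
  have hfin₂ : E₂.Finite := t₂.finDom.subset Set.diff_subset
  have hcard : E₂.ncard = E₁.ncard := by
    have h1 : E₁.ncard = t₁.dom.ncard - 1 :=
      Set.ncard_diff_singleton_of_mem hrootm₁
    have h2 : E₂.ncard = t₂.dom.ncard - 1 :=
      Set.ncard_diff_singleton_of_mem hrootm₂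
    have h3 : t₂.dom.ncard = t₁.dom.ncard := by
      rw [← hbij.image_eq, Set.ncard_image_of_injOn hinj]
    rw [h1, h2, h3]
  -- φ is surjective onto E₂
  have hsurj : E₂ ⊆ φ '' E₁ := by
    have hle : E₂.ncard ≤ (φ '' E₁).ncard := by
      rw [hcard, Set.ncard_image_of_injOn hφinj]
    have himg : φ '' E₁ = E₂ :=
      Set.eq_of_subset_of_ncard_le hmaps.image_subset hle hfin₂
    rw [himg]
  -- main argument
  intro p hp d hpd
  have hmem : p ++ [d] ∈ E₂ := ⟨hpd, by simp⟩
  obtain ⟨q, hqE, hφq⟩ := hsurj hmem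
  obtain ⟨_, hc⟩ := hspec q hqE
  rw [hφq, List.dropLast_concat] at hc
  have hq : q ∈ t₁.dom := hqE.1
  have hqnil : q ≠ [] := by simpa using hqE.2
  have hqd : q.dropLast ∈ t₁.dom := t₁.dropLast_mem hq
  rcases hc with ⟨ha, hb⟩ | ⟨ha, hb⟩
  · -- r q = p, r q.dropLast = p ++ [d]
    have e1 : r' p = q := by rw [← ha, hinv.1 hq]
    have e2 : r' (p ++ [d]) = q.dropLast := by rw [← hb, hinv.1 hqd]
    exact ⟨-1, t₁.neg_one_mem_dirs, by rw [e1, e2, step_neg_one]⟩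
  · -- r q = p ++ [d], r q.dropLast = p
    have e1 : r' p = q.dropLast := by rw [← hb, hinv.1 hqd]
    have e2 : r' (p ++ [d]) = q := by rw [← ha, hinv.1 hq]
    have hql : q.dropLast ++ [q.getLast hqnil] = q := List.dropLast_append_getLast hqnil
    refine ⟨(q.getLast hqnil : ℤ), t₁.mem_dirs_of_child (p := q.dropLast) (by rw [hql]; exact hq), ?_⟩
    rw [e1, e2, step_natCast]
    simp [hql]

end PTree

/-- The rotation relation is symmetric (if `t₁ ∼_r t₂` then
`t₂ ∼_{r⁻¹} t₁`), and consequently `∼` is an equivalence relation. -/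
theorem rotation_symm_equivalence (A : Type) :
    (∀ (t₁ t₂ : PTree A) (r r' : Pos → Pos),
        PTree.IsRotation t₁ t₂ r → Set.InvOn r' r t₁.dom t₂.dom →
        PTree.IsRotation t₂ t₁ r') ∧
    Equivalence (fun t₁ t₂ : PTree A => ∃ r, PTree.IsRotation t₁ t₂ r) := by
  constructor
  · exact fun t₁ t₂ r r' h hinv => PTree.isRotation_symm t₁ t₂ r r' h hinv
  · constructor
    · -- reflexivity
      intro t
      refine ⟨id, Set.bijOn_id _, ?_⟩
      intro p _ d hpd
      exact ⟨(d : ℤ), t.mem_dirs_of_child hpd, by rw [PTree.step_natCast]; rfl⟩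
    · -- symmetry
      rintro t₁ t₂ ⟨r, hr⟩
      refine ⟨Function.invFunOn r t₁.dom, PTree.isRotation_symm t₁ t₂ r _ hr ?_⟩
      exact hr.1.invOn_invFunOn
    · -- transitivity
      rintro t₁ t₂ t₃ ⟨r, hrb, hrrot⟩ ⟨s, hsb, hsrot⟩
      refine ⟨s ∘ r, hsb.comp hrb, ?_⟩
      intro p hp d hpd
      simp only [Function.comp_apply]
      obtain ⟨e, he, hstep⟩ := hrrot p hp d hpd
      have hrp : r p ∈ t₂.dom := hrb.mapsTo hp
      have hrpd : r (p ++ [d]) ∈ t₂.dom := hrb.mapsTo hpd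
      rcases he with rfl | ⟨h0, _⟩
      · -- parent direction in the middle tree
        rw [PTree.step_neg_one] at hstep
        have hne : r p ≠ r (p ++ [d]) := fun hc =>
          (by simp : p ≠ p ++ [d]) (hrb.injOn hp hpd hc)
        have hnil : r p ≠ [] := by
          intro hc
          apply hne
          rw [hc, hstep, hc]
          simp
        have hql : (r p).dropLast ++ [(r p).getLast hnil] = r p :=
          List.dropLast_append_getLast hnil
        have key : r (p ++ [d]) ++ [(r p).getLast hnil] = r p := by
          rw [hstep]; exact hql
        obtain ⟨e', he', hstep'⟩ :=
          hsrot (r (p ++ [d])) hrpd ((r p).getLast hnil) (by rw [key]; exact hrp)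
        rw [key] at hstep'
        have hne2 : s (r (p ++ [d])) ≠ s (r p) := fun hc =>
          hne (hsb.injOn hrpd hrp hc).symm
        exact t₃.reverse_step (hsb.mapsTo hrpd) (hsb.mapsTo hrp) he' hstep' hne2
      · -- child direction in the middle tree
        rw [PTree.step, if_neg (by omega)] at hstep
        obtain ⟨e', he', hstep'⟩ := hsrot (r p) hrp e.toNat (by rw [← hstep]; exact hrpd)
        rw [← hstep] at hstep'
        exact ⟨e', he', hstep'⟩
end

section
/- Let t and u be trees, r a bijection from dom(t) to dom(u) witnessing that u is a rotation of t, and p ∈ dom(t) a position with r(p) = ε (the root of u). Then for every q ∈ dom(t) and every child direction 0 ≤ d < #_t(q) with q.d ∈ dom(t), we have r(q.d) = r(q).(-1) if and only if q.d is a prefix of p. In other words, the only parent-child reversions induced by r occur exactly along the path from the root of t to p. -/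
open scoped Classical

lemma mem_dom_of_prefix {A : Type} (t : PTree A) {q w : Pos} (h : q <+: w) (hw : w ∈ t.dom) :
    q ∈ t.dom := by
  obtain ⟨s, rfl⟩ := h
  induction s using List.reverseRecOn with
  | nil => simpa using hw
  | append_singleton s i ih =>
    exact ih (t.prefixClosed (q ++ s) i (by simpa [List.append_assoc, PTree.dom] using hw))

/-- If `t ∼_r u` and `r p = ε`, then for every `q ∈ dom t` and
child `q.d ∈ dom t`, the edge is reversed (`r (q.d) = r(q).(-1)`) iff `q.d`
is a prefix of `p`. -/
theorem rotation_reversion {A B : Type} (t : PTree A) (u : PTree B) (r : Pos → Pos)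
    (hrot : PTree.IsRotation t u r) (p : Pos) (hp : p ∈ t.dom)
    (hroot : r p = ([] : Pos)) :
    ∀ q ∈ t.dom, ∀ d : ℕ, q ++ [d] ∈ t.dom →
      (r (q ++ [d]) = PTree.step (r q) (-1) ↔ (q ++ [d]) <+: p) := by
  have hinj := hrot.1.injOn
  -- each edge is either reversed or a child step
  have hedge : ∀ q ∈ t.dom, ∀ d : ℕ, q ++ [d] ∈ t.dom →
      r (q ++ [d]) = (r q).dropLast ∨ ∃ n : ℕ, r (q ++ [d]) = r q ++ [n] := by
    intro q hq d hqd
    obtain ⟨e, he, hst⟩ := hrot.2 q hq d hqd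
    rcases (he : e = -1 ∨ (0 ≤ e ∧ e ≤ (u.maxDir : ℤ))) with rfl | ⟨h0, _⟩
    · left; simpa [PTree.step] using hst
    · right
      refine ⟨e.toNat, ?_⟩
      rw [PTree.step, if_neg (by omega)] at hst
      exact hst
  -- Lemma B: edges along the path to p are reversed
  have lemB : ∀ (s : List ℕ) (c : Pos) (d : ℕ), p = c ++ (d :: s) →
      r (c ++ [d]) = (r c).dropLast := by
    intro s
    induction s with
    | nil =>
      intro c d hpe
      have hc : c ∈ t.dom := mem_dom_of_prefix t ⟨[d], hpe.symm⟩ hp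
      have hcd : c ++ [d] ∈ t.dom := by rw [← hpe]; exact hp
      rcases hedge c hc d hcd with h | ⟨n, h⟩
      · exact h
      · exfalso
        have : r (c ++ [d]) = ([] : Pos) := by rw [← hpe]; exact hroot
        rw [this] at h
        simp at h
    | cons d' s'' IH =>
      intro c d hpe
      have hc : c ∈ t.dom := mem_dom_of_prefix t ⟨d :: d' :: s'', hpe.symm⟩ hp
      have hcd : c ++ [d] ∈ t.dom :=
        mem_dom_of_prefix t ⟨d' :: s'', by rw [hpe]; simp⟩ hp
      have hcdd : (c ++ [d]) ++ [d'] ∈ t.dom :=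
        mem_dom_of_prefix t ⟨s'', by rw [hpe]; simp⟩ hp
      have hIH : r ((c ++ [d]) ++ [d']) = (r (c ++ [d])).dropLast :=
        IH (c ++ [d]) d' (by rw [hpe]; simp)
      rcases hedge c hc d hcd with h | ⟨n, h⟩
      · exact h
      · exfalso
        rw [h] at hIH
        simp only [List.dropLast_concat] at hIH
        have := hinj hcdd hc hIH
        have := congrArg List.length this
        simp at this
  -- Lemma F: off-path non-root nodes attach by a non-reversed edge
  have lemF : ∀ (n : ℕ) (x : Pos), x.length ≤ n → x ∈ t.dom → x ≠ [] → ¬ x <+: p →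
      ∃ e : ℕ, r x = r x.dropLast ++ [e] := by
    intro n
    induction n with
    | zero =>
      intro x hlen hx hne _
      exact absurd (List.length_eq_zero_iff.mp (Nat.le_zero.mp hlen)) hne
    | succ n IH =>
      intro x hlen hx hne hnp
      set y := x.dropLast with hy_def
      have hxeq : y ++ [x.getLast hne] = x := List.dropLast_append_getLast hne
      have hy : y ∈ t.dom := mem_dom_of_prefix t ⟨[x.getLast hne], hxeq⟩ hx
      rcases hedge y hy (x.getLast hne) (by rw [hxeq]; exact hx) with hrev | ⟨m, hm⟩
      · -- reversed: derive a contradiction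
        exfalso
        rw [hxeq] at hrev
        by_cases hyp : y <+: p
        · by_cases hyep : y = p
          · -- y = p : r y = [], so r x = [] = r p, so x = p
            rw [hyep, hroot] at hrev
            simp at hrev
            have : x = p := hinj hx hp (by rw [hrev, hroot])
            exact hnp (this ▸ List.prefix_refl p)
          · -- y a proper prefix of p
            obtain ⟨s, hs⟩ := hyp
            cases s with
            | nil => exact hyep (by simpa using hs)
            | cons d0 s0 =>
              have hB : r (y ++ [d0]) = (r y).dropLast := lemB s0 y d0 hs.symm
              have hyd0 : y ++ [d0] ∈ t.dom :=
                mem_dom_of_prefix t ⟨s0, by rw [← hs]; simp⟩ hp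
              have hxy : x = y ++ [d0] := hinj hx hyd0 (by rw [hrev, hB])
              exact hnp ⟨s0, by rw [hxy, ← hs]; simp⟩
        · -- y itself off-path: use IH
          have hyne : y ≠ [] := by
            intro h
            exact hyp (h ▸ List.nil_prefix)
          have hylen : y.length ≤ n := by
            have h1 : y.length = x.length - 1 := by simp [hy_def]
            have h2 : 1 ≤ x.length := List.length_pos_iff.mpr hne
            omega
          obtain ⟨e', he'⟩ := IH y hylen hy hyne hyp
          rw [he'] at hrev
          simp only [List.dropLast_concat] at hrev
          have hyy : y.dropLast ∈ t.dom :=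
            mem_dom_of_prefix t (y.dropLast_prefix) hy
          have hxyy : x = y.dropLast := hinj hx hyy hrev
          have := congrArg List.length hxyy
          have h1 : y.length = x.length - 1 := by simp [hy_def]
          have h2 : 1 ≤ x.length := List.length_pos_iff.mpr hne
          have h3 : 1 ≤ y.length := List.length_pos_iff.mpr hyne
          simp [List.length_dropLast] at this
          omega
      · rw [hxeq] at hm
        exact ⟨m, hm⟩
  -- main statement
  intro q hq d hqd
  constructor
  · intro hrev
    rw [PTree.step, if_pos rfl] at hrev
    by_contra hnp
    obtain ⟨e, he⟩ := lemF (q ++ [d]).length (q ++ [d]) le_rfl hqd (by simp) hnp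
    rw [show (q ++ [d]).dropLast = q by simp] at he
    rw [hrev] at he
    have h := congrArg List.length he
    simp [List.length_dropLast] at h
  · intro hpre
    obtain ⟨s, hs⟩ := hpre
    have : r (q ++ [d]) = (r q).dropLast := lemB s q d (by rw [← hs]; simp)
    rw [PTree.step, if_pos rfl]
    exact this
end

section
/- Let S be a state (a store-heap pair) and t a spanning tree of S such that every edge of S is local with respect to t. Then for every spanning tree t' of S, the composition t'⁻¹ ∘ t witnesses that t' is a rotation of t (i.e., t ∼_{t'⁻¹ ∘ t} t'), and moreover every edge of S is also local with respect to t'. -/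
open scoped Classical

/-- A heap: a finite partial function from locations to lists of successor
locations (the `k`-th entry is the target of selector `k`). -/
structure Heap (Loc : Type) where
  f : Loc → Option (List Loc)
  fin : {ℓ | f ℓ ≠ none}.Finite

namespace Heap

def dom {Loc : Type} (h : Heap Loc) : Set Loc := {ℓ | h.f ℓ ≠ none}

/-- Disjointness of two heaps. -/
def Disj {Loc : Type} (h₁ h₂ : Heap Loc) : Prop :=
  ∀ ℓ, h₁.f ℓ = none ∨ h₂.f ℓ = none

/-- Union of two heaps. -/
def union {Loc : Type} (h₁ h₂ : Heap Loc) : Heap Loc where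
  f := fun ℓ => (h₁.f ℓ).or (h₂.f ℓ)
  fin := by
    apply Set.Finite.subset (h₁.fin.union h₂.fin)
    intro ℓ hℓ
    simp only [Set.mem_setOf_eq, Set.mem_union] at hℓ ⊢
    by_contra hc
    push_neg at hc
    exact hℓ (by simp [hc.1, hc.2])

end Heap

/-- `HEdge h ℓ k ℓ'`: the heap has an edge `ℓ →ᵏ ℓ'`. -/
def HEdge {Loc : Type} (h : Heap Loc) (ℓ : Loc) (k : ℕ) (ℓ' : Loc) : Prop :=
  ∃ ℓs : List Loc, h.f ℓ = some ℓs ∧ ℓs[k]? = some ℓ'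

/-- Image of the heap: all locations which are targets of some edge. -/
def HImg {Loc : Type} (h : Heap Loc) : Set Loc := {ℓ' | ∃ ℓ k, HEdge h ℓ k ℓ'}

/-- Reachability by a chain of heap edges. -/
def Reach {Loc : Type} (h : Heap Loc) : Loc → Loc → Prop :=
  Relation.ReflTransGen (fun a b => ∃ k, HEdge h a k b)

/-- `ℓf` (on the shape of the tree `t`) is a spanning tree of the heap `h`:
a bijection from the tree domain onto the allocated locations such that every
tree edge is underlain by a heap edge. -/
def IsSpanning {Loc A : Type} (h : Heap Loc) (t : PTree A) (ℓf : Pos → Loc) : Prop :=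
  Set.BijOn ℓf t.dom h.dom ∧
  ∀ p ∈ t.dom, ∀ d : ℕ, p ++ [d] ∈ t.dom →
    ∃ k, HEdge h (ℓf p) k (ℓf (p ++ [d]))

/-- An edge `ℓ → ℓ'` is local w.r.t. a spanning tree: its endpoints are at
distance at most one in the tree (`d ∈ D(t) ∪ {ε}`). -/
noncomputable def LocalEdgeWrt {Loc A : Type} (t : PTree A) (ℓf : Pos → Loc) (ℓ ℓ' : Loc) : Prop :=
  ∃ p ∈ t.dom, ℓf p = ℓ ∧
    (ℓ' = ℓ ∨ ∃ e ∈ t.dirs, PTree.step p e ∈ t.dom ∧ ℓf (PTree.step p e) = ℓ')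

/-- All edges of the heap are local with respect to the given spanning tree. -/
noncomputable def AllLocal {Loc A : Type} (h : Heap Loc) (t : PTree A) (ℓf : Pos → Loc) : Prop :=
  ∀ ℓ k ℓ', HEdge h ℓ k ℓ' → LocalEdgeWrt t ℓf ℓ ℓ'

lemma pos_eq_nil_or_append (l : Pos) : l = [] ∨ ∃ q i, l = q ++ [i] := by
  induction l using List.reverseRecOn with
  | nil => exact Or.inl rfl
  | append_singleton q i _ => exact Or.inr ⟨q, i, rfl⟩

lemma ptree_root_mem {A : Type} (t : PTree A) (p : Pos) : p ∈ t.dom → ([] : Pos) ∈ t.dom := by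
  induction p using List.reverseRecOn with
  | nil => exact id
  | append_singleton q i ih => exact fun hp => ih (t.prefixClosed q i hp)

lemma ptree_parent_mem {A : Type} (t : PTree A) (p : Pos) (hp : p ∈ t.dom) :
    p.dropLast ∈ t.dom := by
  rcases pos_eq_nil_or_append p with rfl | ⟨q, i, rfl⟩
  · simpa using hp
  · simpa using (show q ∈ t.dom from t.prefixClosed q i hp)

lemma ptree_bddAbove {A : Type} (t : PTree A) : BddAbove {i : ℕ | ∃ p, p ++ [i] ∈ t.dom} := by
  apply Set.Finite.bddAbove
  apply Set.Finite.subset (t.fin.image (fun l : Pos => l.getLastD 0))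
  rintro i ⟨p, hp⟩
  exact ⟨p ++ [i], hp, by simp⟩

lemma ptree_child_dir {A : Type} (t : PTree A) (p : Pos) (j : ℕ) (hc : p ++ [j] ∈ t.dom) :
    (j : ℤ) ∈ t.dirs := by
  have hj : j ≤ t.maxDir := le_csSup (ptree_bddAbove t) ⟨p, hc⟩
  exact Or.inr ⟨Int.natCast_nonneg j, by exact_mod_cast hj⟩

lemma tree_isom {A B : Type} (t : PTree A) (t' : PTree B) (g : Pos → Pos)
    (hbij : Set.BijOn g t'.dom t.dom)
    (hadj : ∀ c ∈ t'.dom, ∀ d : ℕ, c ++ [d] ∈ t'.dom →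
      (∃ j : ℕ, g (c ++ [d]) = g c ++ [j]) ∨ (∃ j : ℕ, g c = g (c ++ [d]) ++ [j]))
    (p : Pos) (hp : p ∈ t.dom) (d : ℕ) (hpd : p ++ [d] ∈ t.dom) :
    ∃ c ∈ t'.dom, ∃ d' : ℕ, c ++ [d'] ∈ t'.dom ∧
      ((g c = p ∧ g (c ++ [d']) = p ++ [d]) ∨ (g c = p ++ [d] ∧ g (c ++ [d']) = p)) := by
  classical
  set A' : Set Pos := t'.dom \ {([] : Pos)} with hA'
  set B' : Set Pos := t.dom \ {([] : Pos)} with hB'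
  set F : Pos → Pos := fun c => if (g c).dropLast = g c.dropLast then g c else g c.dropLast
    with hFdef
  have hF : ∀ c ∈ A', F c ∈ t.dom ∧ F c ≠ [] ∧
      ((F c = g c ∧ (F c).dropLast = g c.dropLast) ∨
        (F c = g c.dropLast ∧ (F c).dropLast = g c)) := by
    intro c hc
    have hc1 : c ∈ t'.dom := hc.1
    have hcne : c ≠ [] := by intro hE; exact hc.2 (by simp [hE])
    rcases pos_eq_nil_or_append c with rfl | ⟨q, i, rfl⟩
    · exact absurd rfl hcne
    · have hq : q ∈ t'.dom := t'.prefixClosed q i hc1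
      have hdl : (q ++ [i]).dropLast = q := List.dropLast_concat ..
      rcases hadj q hq i hc1 with ⟨j, hj⟩ | ⟨j, hj⟩
      · have hcond : (g (q ++ [i])).dropLast = g ((q ++ [i]).dropLast) := by
          rw [hdl, hj, List.dropLast_concat]
        have hFv : F (q ++ [i]) = g (q ++ [i]) := by
          simp only [hFdef]; rw [if_pos hcond]
        refine ⟨hFv ▸ hbij.1 hc1, ?_, Or.inl ⟨hFv, hFv ▸ hcond⟩⟩
        rw [hFv, hj]; simp
      · have hcond : ¬ (g (q ++ [i])).dropLast = g ((q ++ [i]).dropLast) := by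
          rw [hdl]
          intro hE
          rw [hj] at hE
          have := congrArg List.length hE
          simp [List.length_dropLast] at this
        have hFv : F (q ++ [i]) = g ((q ++ [i]).dropLast) := by
          simp only [hFdef]; rw [if_neg hcond]
        have hmem : F (q ++ [i]) ∈ t.dom := by rw [hFv, hdl]; exact hbij.1 hq
        refine ⟨hmem, ?_, Or.inr ⟨hFv, ?_⟩⟩
        · rw [hFv, hdl, hj]; simp
        · rw [hFv, hdl, hj, List.dropLast_concat]
  have hFinj : Set.InjOn F A' := by
    intro c₁ h₁ c₂ h₂ hEq
    obtain ⟨hm₁, hne₁, hp₁⟩ := hF c₁ h₁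
    obtain ⟨hm₂, hne₂, hp₂⟩ := hF c₂ h₂
    have hd₁ : c₁.dropLast ∈ t'.dom := ptree_parent_mem t' c₁ h₁.1
    have hd₂ : c₂.dropLast ∈ t'.dom := ptree_parent_mem t' c₂ h₂.1
    have hginj := hbij.2.1
    have hne₁' : c₁ ≠ [] := by intro hE; exact h₁.2 (by simp [hE])
    have hne₂' : c₂ ≠ [] := by intro hE; exact h₂.2 (by simp [hE])
    rcases hp₁ with ⟨e₁, e₁'⟩ | ⟨e₁, e₁'⟩ <;> rcases hp₂ with ⟨e₂, e₂'⟩ | ⟨e₂, e₂'⟩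
    · exact hginj h₁.1 h₂.1 (by rw [← e₁, ← e₂, hEq])
    · exfalso
      have k₁ : c₁ = c₂.dropLast := hginj h₁.1 hd₂ (by rw [← e₁, ← e₂, hEq])
      have k₂ : c₁.dropLast = c₂ := hginj hd₁ h₂.1 (by
        rw [← e₁'] ; rw [← e₂']; rw [hEq])
      have l₁ := congrArg List.length k₁
      have l₂ := congrArg List.length k₂
      have hl1 : 1 ≤ c₁.length := List.length_pos_iff.mpr hne₁'
      have hl2 : 1 ≤ c₂.length := List.length_pos_iff.mpr hne₂'
      simp only [List.length_dropLast] at l₁ l₂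
      omega
    · exfalso
      have k₁ : c₂ = c₁.dropLast := hginj h₂.1 hd₁ (by rw [← e₂, ← e₁, hEq])
      have k₂ : c₂.dropLast = c₁ := hginj hd₂ h₁.1 (by rw [← e₂', ← e₁', hEq])
      have l₁ := congrArg List.length k₁
      have l₂ := congrArg List.length k₂
      have hl1 : 1 ≤ c₁.length := List.length_pos_iff.mpr hne₁'
      have hl2 : 1 ≤ c₂.length := List.length_pos_iff.mpr hne₂'
      simp only [List.length_dropLast] at l₁ l₂
      omega
    · have : c₁.dropLast = c₂.dropLast := hginj hd₁ hd₂ (by rw [← e₁, ← e₂, hEq])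
      have h2 : c₁ = c₂ := hginj h₁.1 h₂.1 (by rw [← e₁', ← e₂', hEq])
      exact h2
  have hfin : t.dom.Finite := t.fin
  have hfin' : t'.dom.Finite := t'.fin
  have hcardEq : t'.dom.ncard = t.dom.ncard := by
    rw [← hbij.image_eq]
    exact (Set.ncard_image_of_injOn hbij.2.1).symm
  have hroot : ([] : Pos) ∈ t.dom := ptree_root_mem t p hp
  have hroot' : ([] : Pos) ∈ t'.dom := by
    obtain ⟨c, hc, -⟩ := hbij.2.2 hroot
    exact ptree_root_mem t' c hc
  have hcard : A'.ncard = B'.ncard := by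
    rw [hA', hB', Set.ncard_diff_singleton_of_mem hroot',
      Set.ncard_diff_singleton_of_mem hroot, hcardEq]
  have hFmaps : Set.MapsTo F A' B' := by
    intro c hc
    obtain ⟨hm, hne, -⟩ := hF c hc
    exact ⟨hm, by simp [hne]⟩
  have himg : F '' A' = B' := by
    apply Set.eq_of_subset_of_ncard_le hFmaps.image_subset ?_ hfin.diff
    rw [Set.ncard_image_of_injOn hFinj, hcard]
  have hxB : p ++ [d] ∈ B' := ⟨hpd, by simp⟩
  rw [← himg] at hxB
  obtain ⟨c, hcA, hFc⟩ := hxB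
  obtain ⟨hm, hne, hprop⟩ := hF c hcA
  have hcne : c ≠ [] := by intro hE; exact hcA.2 (by simp [hE])
  rcases pos_eq_nil_or_append c with rfl | ⟨q, i, rfl⟩
  · exact absurd rfl hcne
  · have hq : q ∈ t'.dom := t'.prefixClosed q i hcA.1
    have hdl : (q ++ [i]).dropLast = q := List.dropLast_concat ..
    refine ⟨q, hq, i, hcA.1, ?_⟩
    rcases hprop with ⟨e₁, e₂⟩ | ⟨e₁, e₂⟩
    · left
      constructor
      · rw [← hdl]
        rw [← e₂, hFc, List.dropLast_concat]
      · rw [← e₁, hFc]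
    · right
      constructor
      · rw [← hdl, ← e₁, hFc]
      · rw [← e₂, hFc, List.dropLast_concat]

/-- If `t` is a spanning tree of the state `S = ⟨s,h⟩` all of whose
edges are local w.r.t. `t`, then for every spanning tree `t'` of `S`,
`t ∼_{t'⁻¹ ∘ t} t'` and all edges of `S` are local w.r.t. `t'` as well. -/
theorem spanning_tree_rotation {Var Loc A B : Type}
    (s : Var → Option Loc) (h : Heap Loc)
    (t : PTree A) (ℓf : Pos → Loc) (t' : PTree B) (ℓf' : Pos → Loc)
    (hst : IsSpanning h t ℓf) (hloc : AllLocal h t ℓf)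
    (hst' : IsSpanning h t' ℓf')
    (r : Pos → Pos)
    (hr : ∀ p ∈ t.dom, r p ∈ t'.dom ∧ ℓf' (r p) = ℓf p) :
    PTree.IsRotation t t' r ∧ AllLocal h t' ℓf' := by
  classical
  obtain ⟨⟨hmt, hit, hsurj⟩, hedge⟩ := hst
  obtain ⟨⟨hmt', hit', hsurj'⟩, hedge'⟩ := hst'
  have hgex : ∀ q : Pos, ∃ p : Pos, q ∈ t'.dom → p ∈ t.dom ∧ ℓf p = ℓf' q := by
    intro q
    by_cases hq : q ∈ t'.dom
    · obtain ⟨p, hp, hpe⟩ := hsurj (hmt' hq)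
      exact ⟨p, fun _ => ⟨hp, hpe⟩⟩
    · exact ⟨[], fun hE => absurd hE hq⟩
  choose g hg using hgex
  have hgdom : ∀ q ∈ t'.dom, g q ∈ t.dom := fun q hq => (hg q hq).1
  have hrg : ∀ q ∈ t'.dom, r (g q) = q := by
    intro q hq
    apply hit' (hr (g q) (hgdom q hq)).1 hq
    rw [(hr (g q) (hgdom q hq)).2, (hg q hq).2]
  have hgr : ∀ p ∈ t.dom, g (r p) = p := by
    intro p hp
    apply hit (hgdom _ (hr p hp).1) hp
    rw [(hg _ (hr p hp).1).2, (hr p hp).2]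
  have hgbij : Set.BijOn g t'.dom t.dom := by
    refine ⟨fun q hq => hgdom q hq, ?_, ?_⟩
    · intro a ha b hb hab
      rw [← hrg a ha, ← hrg b hb, hab]
    · intro p hp
      exact ⟨r p, (hr p hp).1, hgr p hp⟩
  have hrbij : Set.BijOn r t.dom t'.dom := by
    refine ⟨fun p hp => (hr p hp).1, ?_, ?_⟩
    · intro a ha b hb hab
      have hE := congrArg ℓf' hab
      rw [(hr a ha).2, (hr b hb).2] at hE
      exact hit ha hb hE
    · intro q hq
      exact ⟨g q, hgdom q hq, hrg q hq⟩
  have hadj : ∀ c ∈ t'.dom, ∀ d : ℕ, c ++ [d] ∈ t'.dom →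
      (∃ j : ℕ, g (c ++ [d]) = g c ++ [j]) ∨ (∃ j : ℕ, g c = g (c ++ [d]) ++ [j]) := by
    intro c hc d hcd
    obtain ⟨k, hk⟩ := hedge' c hc d hcd
    obtain ⟨p₀, hp₀, hpe, hdisc⟩ := hloc _ k _ hk
    have hp₀g : p₀ = g c := by
      apply hit hp₀ (hgdom c hc)
      rw [hpe, (hg c hc).2]
    subst hp₀g
    have hcdne : g (c ++ [d]) ≠ g c := by
      intro hE
      have := hgbij.2.1 hcd hc hE
      simpa using this
    rcases hdisc with hE | ⟨e, he, hstep, hse⟩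
    · exfalso
      exact hcdne (by
        apply hit (hgdom _ hcd) (hgdom c hc)
        rw [(hg _ hcd).2, hE, (hg c hc).2])
    · have hgeq : PTree.step (g c) e = g (c ++ [d]) := by
        apply hit hstep (hgdom _ hcd)
        rw [hse, (hg _ hcd).2]
      rcases he with rfl | ⟨h0, -⟩
      · -- parent direction
        have hstep1 : PTree.step (g c) (-1) = (g c).dropLast := by simp [PTree.step]
        rw [hstep1] at hgeq
        rcases pos_eq_nil_or_append (g c) with hnil | ⟨q₀, i₀, hq₀⟩
        · exfalso
          apply hcdne
          rw [← hgeq, hnil]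
          rfl
        · right
          refine ⟨i₀, ?_⟩
          rw [← hgeq, hq₀, List.dropLast_concat]
      · left
        have hne : e ≠ -1 := by omega
        refine ⟨e.toNat, ?_⟩
        rw [← hgeq]
        simp [PTree.step, hne]
  have key : ∀ p ∈ t.dom, ∀ d : ℕ, p ++ [d] ∈ t.dom →
      (∃ j : ℕ, (j : ℤ) ∈ t'.dirs ∧ r (p ++ [d]) = r p ++ [j]) ∨
      (∃ j : ℕ, (j : ℤ) ∈ t'.dirs ∧ r p = r (p ++ [d]) ++ [j]) := by
    intro p hp d hpd
    obtain ⟨c, hc, d', hcd', hcase⟩ := tree_isom t t' g hgbij hadj p hp d hpd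
    rcases hcase with ⟨h1, h2⟩ | ⟨h1, h2⟩
    · left
      refine ⟨d', ptree_child_dir t' c d' hcd', ?_⟩
      have e1 : r p = c := by rw [← h1]; exact hrg c hc
      have e2 : r (p ++ [d]) = c ++ [d'] := by rw [← h2]; exact hrg _ hcd'
      rw [e1, e2]
    · right
      refine ⟨d', ptree_child_dir t' c d' hcd', ?_⟩
      have e1 : r (p ++ [d]) = c := by rw [← h1]; exact hrg c hc
      have e2 : r p = c ++ [d'] := by rw [← h2]; exact hrg _ hcd'
      rw [e1, e2]
  have hrot : PTree.IsRotation t t' r := by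
    refine ⟨hrbij, ?_⟩
    intro p hp d hpd
    rcases key p hp d hpd with ⟨j, hj, he⟩ | ⟨j, hj, he⟩
    · refine ⟨(j : ℤ), hj, ?_⟩
      have hne : ((j : ℤ)) ≠ -1 := by omega
      rw [he]
      simp [PTree.step, hne]
    · refine ⟨-1, Or.inl rfl, ?_⟩
      simp [PTree.step, he]
  refine ⟨hrot, ?_⟩
  intro ℓ k ℓ' hE
  obtain ⟨p, hp, hpe, hdisc⟩ := hloc ℓ k ℓ' hE
  rcases hdisc with hE' | ⟨e, he, hstep, hse⟩
  · exact ⟨r p, (hr p hp).1, by rw [(hr p hp).2, hpe], Or.inl hE'⟩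
  · rcases he with rfl | ⟨h0, -⟩
    · -- parent step in t
      have hstep1 : PTree.step p (-1) = p.dropLast := by simp [PTree.step]
      rw [hstep1] at hstep hse
      rcases pos_eq_nil_or_append p with rfl | ⟨q, i, rfl⟩
      · refine ⟨r [], (hr [] hp).1, by rw [(hr [] hp).2, hpe], Or.inl ?_⟩
        simp at hse
        rw [← hse, hpe]
      · have hdl : (q ++ [i]).dropLast = q := List.dropLast_concat ..
        rw [hdl] at hstep hse
        rcases key q hstep i hp with ⟨j, hj, heq⟩ | ⟨j, hj, heq⟩
        · -- r (q++[i]) = r q ++ [j] : target is parent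
          refine ⟨r (q ++ [i]), (hr _ hp).1, by rw [(hr _ hp).2, hpe],
            Or.inr ⟨-1, Or.inl rfl, ?_, ?_⟩⟩
          · have : PTree.step (r (q ++ [i])) (-1) = r q := by
              simp [PTree.step, heq]
            rw [this]; exact (hr q hstep).1
          · have : PTree.step (r (q ++ [i])) (-1) = r q := by
              simp [PTree.step, heq]
            rw [this, (hr q hstep).2, hse]
        · -- r q = r (q++[i]) ++ [j] : target is child
          have hne : ((j : ℤ)) ≠ -1 := by omega
          have hstep2 : PTree.step (r (q ++ [i])) (j : ℤ) = r q := by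
            simp [PTree.step, hne, heq]
          refine ⟨r (q ++ [i]), (hr _ hp).1, by rw [(hr _ hp).2, hpe],
            Or.inr ⟨(j : ℤ), hj, ?_, ?_⟩⟩
          · rw [hstep2]; exact (hr q hstep).1
          · rw [hstep2, (hr q hstep).2, hse]
    · -- child step in t
      have hne0 : e ≠ -1 := by omega
      have hstep1 : PTree.step p e = p ++ [e.toNat] := by simp [PTree.step, hne0]
      rw [hstep1] at hstep hse
      rcases key p hp e.toNat hstep with ⟨j, hj, heq⟩ | ⟨j, hj, heq⟩
      · have hne : ((j : ℤ)) ≠ -1 := by omega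
        have hstep2 : PTree.step (r p) (j : ℤ) = r (p ++ [e.toNat]) := by
          simp [PTree.step, hne, heq]
        refine ⟨r p, (hr p hp).1, by rw [(hr p hp).2, hpe],
          Or.inr ⟨(j : ℤ), hj, ?_, ?_⟩⟩
        · rw [hstep2]; exact (hr _ hstep).1
        · rw [hstep2, (hr _ hstep).2, hse]
      · have hstep2 : PTree.step (r p) (-1) = r (p ++ [e.toNat]) := by
          simp [PTree.step, heq]
        refine ⟨r p, (hr p hp).1, by rw [(hr p hp).2, hpe],
          Or.inr ⟨-1, Or.inl rfl, ?_, ?_⟩⟩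
        · rw [hstep2]; exact (hr _ hstep).1
        · rw [hstep2, (hr _ hstep).2, hse]
end

section
/- Rotation preserves domain cardinality and, for trees related by rotation, every child of a node in one tree corresponds under the rotation map to a neighbor (child or parent) of the image node; consequently, if t ∼_r u and both t and u are trees, then any simple path in t maps under r to a simple path in u of the same length. -/
open scoped Classical

lemma maxDir_bdd {B : Type} (u : PTree B) {p : Pos} {j : ℕ} (hp : p ++ [j] ∈ u.dom) :
    j ≤ u.maxDir := by
  have hS : {i | ∃ q : Pos, q ++ [i] ∈ u.dom}.Finite := by
    apply Set.Finite.subset (u.fin.image (fun q => q.getLastD 0))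
    rintro i ⟨q, hq⟩
    exact ⟨q ++ [i], hq, by simp⟩
  exact le_csSup hS.bddAbove ⟨p, hp⟩

lemma key_step {A B : Type} (t : PTree A) (u : PTree B) (r : Pos → Pos)
    (h : PTree.IsRotation t u r) (a b : Pos) (ha : a ∈ t.dom) (hb : b ∈ t.dom)
    (hne : a ≠ b) (hstep : ∃ e ∈ t.dirs, b = PTree.step a e) :
    ∃ e ∈ u.dirs, r b = PTree.step (r a) e := by
  obtain ⟨e, he, hbe⟩ := hstep
  rcases he with he1 | ⟨he0, _⟩
  · -- parent direction: b = a.dropLast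
    subst he1
    simp only [PTree.step, if_pos rfl] at hbe
    have hanil : a ≠ [] := by
      rintro rfl; exact hne (by simpa using hbe)
    have haeq : b ++ [a.getLast hanil] = a := by
      rw [hbe]; exact List.dropLast_append_getLast hanil
    obtain ⟨e', he', hre⟩ := h.2 b hb (a.getLast hanil) (by rwa [haeq])
    rw [haeq] at hre
    rcases he' with he1' | ⟨he0', _⟩
    · subst he1'
      simp only [PTree.step, if_pos rfl] at hre
      have hrne : r a ≠ r b := fun hh => hne (h.1.injOn ha hb hh)
      have hrbnil : r b ≠ [] := by
        rintro hnil; rw [hnil] at hre; exact hrne (by simpa [hnil] using hre)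
      have hrbeq : r a ++ [(r b).getLast hrbnil] = r b := by
        rw [hre]; exact List.dropLast_append_getLast hrbnil
      refine ⟨((r b).getLast hrbnil : ℤ), Or.inr ⟨Int.ofNat_nonneg _, ?_⟩, ?_⟩
      · have : (r b).getLast hrbnil ≤ u.maxDir := by
          apply maxDir_bdd u (p := r a)
          rw [hrbeq]; exact h.1.mapsTo hb
        exact_mod_cast this
      · rw [PTree.step, if_neg (by omega), Int.toNat_natCast, hrbeq]
    · -- e' ≥ 0 : r a = r b ++ [e'.toNat], so r b = (r a).dropLast
      rw [PTree.step, if_neg (by omega)] at hre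
      refine ⟨-1, Or.inl rfl, ?_⟩
      rw [PTree.step, if_pos rfl, hre]
      simp
  · -- child direction
    rw [PTree.step, if_neg (by omega)] at hbe
    subst hbe
    exact h.2 a ha e.toNat hb

lemma chain_map {A B : Type} (t : PTree A) (u : PTree B) (r : Pos → Pos)
    (h : PTree.IsRotation t u r) :
    ∀ ps : List Pos, ps.Nodup → (∀ q ∈ ps, q ∈ t.dom) →
      ps.Chain' (fun a b => ∃ e ∈ t.dirs, b = PTree.step a e) →
      (ps.map r).Chain' (fun a b => ∃ e ∈ u.dirs, b = PTree.step a e) := by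
  intro ps
  induction ps with
  | nil => intro _ _ _; exact List.IsChain.nil
  | cons x l ih =>
    intro hnd hmem hch
    cases l with
    | nil => exact List.IsChain.singleton _
    | cons y l' =>
      rw [List.Chain', List.isChain_cons_cons] at hch
      simp only [List.map_cons, List.Chain', List.isChain_cons_cons]
      constructor
      · exact key_step t u r h x y (hmem x (by simp)) (hmem y (by simp))
          (by have := hnd; simp [List.nodup_cons] at this; tauto) hch.1
      · have := ih (hnd.of_cons) (fun q hq => hmem q (List.mem_cons_of_mem _ hq)) hch.2
        simpa [List.Chain'] using this

/-- Rotations preserve the cardinality of the domain, map children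
to neighbours, and consequently map simple paths to simple paths of the same
length. -/
theorem rotation_preserves_paths {A B : Type} (t : PTree A) (u : PTree B)
    (r : Pos → Pos) (h : PTree.IsRotation t u r) :
    t.dom.ncard = u.dom.ncard ∧
    (∀ p ∈ t.dom, ∀ d : ℕ, p ++ [d] ∈ t.dom →
      ∃ e ∈ u.dirs, r (p ++ [d]) = PTree.step (r p) e) ∧
    (∀ ps : List Pos, PTree.IsPath t ps →
      PTree.IsPath u (ps.map r) ∧ (ps.map r).length = ps.length) := by
  refine ⟨?_, h.2, ?_⟩
  · rw [← h.1.image_eq, Set.ncard_image_of_injOn h.1.injOn]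
  · intro ps hps
    obtain ⟨hnd, hmem, hch⟩ := hps
    refine ⟨⟨?_, ?_, ?_⟩, by simp⟩
    · exact List.Nodup.map_on (fun x hx y hy hxy => h.1.injOn (hmem x hx) (hmem y hy) hxy) hnd
    · intro q hq
      obtain ⟨p, hp, rfl⟩ := List.mem_map.mp hq
      exact h.1.mapsTo (hmem p hp)
    · exact chain_map t u r h ps hnd hmem hch
end
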